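/- Let q be an odd prime power and let λ, μ be positive integers with μ ≤ λ, such that either q ≡ 3 (mod 4) and λ is even, or q ≡ 1 (mod 4). Then both of the rational numbers ((q^μ+1)(q^{λ−μ}−1) / (2(q^λ−1))) · [λ, μ]_{q²} and ((q^μ−1)(q^{λ−μ}+1) / (2(q^λ−1))) · [λ, μ]_{q²} are integers. -/

import Mathlib

/-- Gaussian binomial coefficient with rational base `Q`:
`[a, b]_Q = ∏_{i=0}^{b-1} (Q^a - Q^i)/(Q^b - Q^i)`. -/
def gbinom (Q : ℚ) (a b : ℕ) : ℚ :=
  ∏ i ∈ Finset.range b, (Q ^ a - Q ^ i) / (Q ^ b - Q ^ i)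

namespace GBaux

/-- Auxiliary product `∏_{i<b} (x^(a-i) - 1)`. -/
def fp (x : ℚ) (a b : ℕ) : ℚ := ∏ i ∈ Finset.range b, (x ^ (a - i) - 1)

lemma fp_pos {x : ℚ} (hx : 1 < x) {a b : ℕ} (h : b ≤ a) : 0 < fp x a b := by
  apply Finset.prod_pos
  intro i hi
  rw [Finset.mem_range] at hi
  have h1 : 1 < x ^ (a - i) := one_lt_pow₀ hx (by omega)
  linarith

lemma gbinom_eq_fp {x : ℚ} (hx : 1 < x) {a b : ℕ} (h : b ≤ a) :
    gbinom x a b = fp x a b / fp x b b := by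
  unfold gbinom fp
  rw [← Finset.prod_div_distrib]
  apply Finset.prod_congr rfl
  intro i hi
  rw [Finset.mem_range] at hi
  have ha : x ^ a = x ^ i * x ^ (a - i) := by rw [← pow_add]; congr 1; omega
  have hb : x ^ b = x ^ i * x ^ (b - i) := by rw [← pow_add]; congr 1; omega
  have hxi : x ^ i ≠ 0 := pow_ne_zero _ (by linarith)
  rw [ha, hb, show x ^ i * x ^ (a - i) - x ^ i = x ^ i * (x ^ (a - i) - 1) by ring,
      show x ^ i * x ^ (b - i) - x ^ i = x ^ i * (x ^ (b - i) - 1) by ring,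
      mul_div_mul_left _ _ hxi]

lemma gbinom_self {x : ℚ} (hx : 1 < x) (a : ℕ) : gbinom x a a = 1 := by
  rw [gbinom_eq_fp hx le_rfl, div_self (fp_pos hx le_rfl).ne']

lemma gbinom_zero (x : ℚ) (a : ℕ) : gbinom x a 0 = 1 := by simp [gbinom]

lemma fp_succ_succ (x : ℚ) (a b : ℕ) :
    fp x (a + 1) (b + 1) = (x ^ (a + 1) - 1) * fp x a b := by
  unfold fp
  rw [Finset.prod_range_succ']
  simp only [Nat.add_sub_add_right, Nat.sub_zero]
  ring

lemma fp_succ (x : ℚ) (a b : ℕ) : fp x a (b + 1) = fp x a b * (x ^ (a - b) - 1) :=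
  Finset.prod_range_succ _ _

lemma gbinom_R1 {x : ℚ} (hx : 1 < x) {a b : ℕ} (h : b ≤ a) :
    gbinom x (a + 1) (b + 1) = (x ^ (a + 1) - 1) / (x ^ (b + 1) - 1) * gbinom x a b := by
  rw [gbinom_eq_fp hx (by omega : b + 1 ≤ a + 1), gbinom_eq_fp hx h,
      fp_succ_succ, fp_succ_succ, mul_div_mul_comm]

lemma gbinom_R2 {x : ℚ} (hx : 1 < x) {a b : ℕ} (h : b + 1 ≤ a) :
    gbinom x a (b + 1) = (x ^ (a - b) - 1) / (x ^ (b + 1) - 1) * gbinom x a b := by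
  rw [gbinom_eq_fp hx h, gbinom_eq_fp hx (by omega : b ≤ a), fp_succ,
      fp_succ_succ x b b, mul_comm (fp x a b), mul_div_mul_comm]

/-- Key integrality + parity statement, by induction on `l`. -/
lemma key (q : ℕ) (hq2 : 2 ≤ q) (hodd : Odd q) :
    ∀ l : ℕ, ∀ m : ℕ, m ≤ l → 1 ≤ l →
    ∃ c d : ℤ, gbinom ((q : ℚ) ^ 2) l m = (c : ℚ) ∧
      ((q : ℚ) ^ (l - m) - (q : ℚ) ^ m) / ((q : ℚ) ^ l - 1) * gbinom ((q : ℚ) ^ 2) l m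
        = (d : ℚ) ∧ (2 : ℤ) ∣ (c - d) := by
  have hq1 : (1 : ℚ) < (q : ℚ) := by exact_mod_cast hq2
  have hq1' : (1 : ℚ) < (q : ℚ) ^ 2 := one_lt_pow₀ hq1 (by norm_num)
  have hnz : ∀ n : ℕ, 1 ≤ n → ((q : ℚ) ^ n - 1) ≠ 0 := by
    intro n hn
    have : (1 : ℚ) < (q : ℚ) ^ n := one_lt_pow₀ hq1 (by omega)
    linarith
  have hoddZ : ∀ n : ℕ, Odd ((q : ℤ) ^ n) := fun n => (Int.odd_coe_nat q |>.mpr hodd).pow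
  have hpw : ∀ n : ℕ, ((q : ℚ) ^ 2) ^ n = (q : ℚ) ^ (2 * n) := fun n => (pow_mul _ 2 n).symm
  intro l
  induction l with
  | zero => intro m _ h1; omega
  | succ l IH =>
    intro m hm _
    rcases m with _ | m
    · -- m = 0
      refine ⟨1, 1, by simp [gbinom_zero], ?_, by norm_num⟩
      rw [gbinom_zero]
      have h := hnz (l + 1) (by omega)
      simp only [Nat.sub_zero, pow_zero]
      field_simp
      norm_num
    · by_cases hml : m = l
      · -- diagonal case
        subst hml
        refine ⟨1, -1, ?_, ?_, by norm_num⟩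
        · simpa using gbinom_self hq1' (m + 1)
        · rw [show m + 1 - (m + 1) = 0 from by omega, gbinom_self hq1' (m + 1), pow_zero]
          have h := hnz (m + 1) (by omega)
          field_simp
          push_cast
          ring
      · -- interior case : m + 1 ≤ l
        have hm1l : m + 1 ≤ l := by omega
        obtain ⟨k, rfl⟩ : ∃ k, l = m + 1 + k := ⟨l - (m + 1), by omega⟩
        obtain ⟨c1, d1, hc1, hd1, hp1⟩ := IH m (by omega) (by omega)
        obtain ⟨c2, d2, hc2, hd2, hp2⟩ := IH (m + 1) (by omega) (by omega)
        have e1 : m + 1 + k - m = k + 1 := by omega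
        have e2 : m + 1 + k - (m + 1) = k := by omega
        have e3 : m + 1 + k + 1 - (m + 1) = k + 1 := by omega
        rw [e1] at hd1
        rw [e2] at hd2
        have hR1 : gbinom ((q : ℚ) ^ 2) (m + 1 + k + 1) (m + 1)
            = (((q : ℚ) ^ 2) ^ (m + 1 + k + 1) - 1) / (((q : ℚ) ^ 2) ^ (m + 1) - 1)
              * gbinom ((q : ℚ) ^ 2) (m + 1 + k) m := gbinom_R1 hq1' (by omega)
        have hR2 : gbinom ((q : ℚ) ^ 2) (m + 1 + k) (m + 1)
            = (((q : ℚ) ^ 2) ^ (m + 1 + k - m) - 1) / (((q : ℚ) ^ 2) ^ (m + 1) - 1)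
              * gbinom ((q : ℚ) ^ 2) (m + 1 + k) m := gbinom_R2 hq1' (by omega)
        rw [e1] at hR2
        have hc2' : (((q : ℚ) ^ 2) ^ (k + 1) - 1) / (((q : ℚ) ^ 2) ^ (m + 1) - 1)
            * gbinom ((q : ℚ) ^ 2) (m + 1 + k) m = (c2 : ℚ) := by rw [← hR2]; exact hc2
        have hd2' : ((q : ℚ) ^ k - (q : ℚ) ^ (m + 1)) / ((q : ℚ) ^ (m + 1 + k) - 1)
            * ((((q : ℚ) ^ 2) ^ (k + 1) - 1) / (((q : ℚ) ^ 2) ^ (m + 1) - 1)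
              * gbinom ((q : ℚ) ^ 2) (m + 1 + k) m) = (d2 : ℚ) := by
          rw [← hR2]; exact hd2
        have hA : ((q : ℚ) ^ (2 * (m + 1)) - 1) ≠ 0 := hnz _ (by omega)
        have hB : ((q : ℚ) ^ (m + 1 + k) - 1) ≠ 0 := hnz _ (by omega)
        have hC : ((q : ℚ) ^ (m + 1 + k + 1) - 1) ≠ 0 := hnz _ (by omega)
        refine ⟨c1 + (q : ℤ) ^ (2 * (m + 1)) * c2,
          (q : ℤ) ^ (m + 1 + k + 1) * d1 + (q : ℤ) ^ (2 * (m + 1)) * d2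
            + ((q : ℤ) ^ (m + 1) - (q : ℤ) ^ (k + 1)) * c1, ?_, ?_, ?_⟩
        · push_cast
          rw [hR1, ← hc1, ← hc2']
          simp only [hpw]
          field_simp
          ring
        · rw [e3]
          push_cast
          rw [hR1, ← hd1, ← hd2', ← hc1]
          simp only [hpw]
          field_simp
          ring
        · -- parity
          have hkey : (c1 + (q : ℤ) ^ (2 * (m + 1)) * c2)
              - ((q : ℤ) ^ (m + 1 + k + 1) * d1 + (q : ℤ) ^ (2 * (m + 1)) * d2
                + ((q : ℤ) ^ (m + 1) - (q : ℤ) ^ (k + 1)) * c1)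
              = (q : ℤ) ^ (m + 1 + k + 1) * (c1 - d1) + (q : ℤ) ^ (2 * (m + 1)) * (c2 - d2)
                + ((1 - (q : ℤ) ^ (m + 1 + k + 1)) + ((q : ℤ) ^ (k + 1) - (q : ℤ) ^ (m + 1)))
                  * c1 := by ring
          rw [hkey]
          have h3 : (2 : ℤ) ∣ ((1 - (q : ℤ) ^ (m + 1 + k + 1))
              + ((q : ℤ) ^ (k + 1) - (q : ℤ) ^ (m + 1))) := by
            have e1 : Even (1 - (q : ℤ) ^ (m + 1 + k + 1)) := (odd_one).sub_odd (hoddZ _)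
            have e2 : Even ((q : ℤ) ^ (k + 1) - (q : ℤ) ^ (m + 1)) :=
              (hoddZ _).sub_odd (hoddZ _)
            exact (e1.add e2).two_dvd
          exact dvd_add (dvd_add (Dvd.dvd.mul_left hp1 _) (Dvd.dvd.mul_left hp2 _))
            (Dvd.dvd.mul_right h3 _)

end GBaux

/-- divisibility result for odd prime powers `q` with either
`q ≡ 3 (mod 4)` and `λ` even, or `q ≡ 1 (mod 4)`. -/
theorem gaussian_binom_divisibility_one_mod_four
    (q lam mu : ℕ) (hq : IsPrimePow q) (hqodd : Odd q)
    (hlam0 : 0 < lam) (hmu0 : 0 < mu) (hle : mu ≤ lam)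
    (hcase : (q % 4 = 3 ∧ Even lam) ∨ q % 4 = 1) :
    (∃ z : ℤ, ((q : ℚ) ^ mu + 1) * ((q : ℚ) ^ (lam - mu) - 1) / (2 * ((q : ℚ) ^ lam - 1)) *
      gbinom ((q : ℚ) ^ 2) lam mu = (z : ℚ)) ∧
    (∃ z : ℤ, ((q : ℚ) ^ mu - 1) * ((q : ℚ) ^ (lam - mu) + 1) / (2 * ((q : ℚ) ^ lam - 1)) *
      gbinom ((q : ℚ) ^ 2) lam mu = (z : ℚ)) := by
  have hq2 : 2 ≤ q := hq.two_le
  have hq1 : (1 : ℚ) < (q : ℚ) := by exact_mod_cast hq2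
  obtain ⟨c, d, hc, hd, hpar⟩ := GBaux.key q hq2 hqodd lam mu hle hlam0
  obtain ⟨t, rfl⟩ : ∃ t, lam = mu + t := ⟨lam - mu, by omega⟩
  have et : mu + t - mu = t := by omega
  rw [et] at hd ⊢
  have hnz : ((q : ℚ) ^ (mu + t) - 1) ≠ 0 := by
    have : (1 : ℚ) < (q : ℚ) ^ (mu + t) := one_lt_pow₀ hq1 (by omega)
    linarith
  constructor
  · obtain ⟨e, he⟩ : (2 : ℤ) ∣ (c + d) := by
      obtain ⟨w, hw⟩ := hpar
      exact ⟨d + w, by omega⟩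
    refine ⟨e, ?_⟩
    have hE : ((q : ℚ) ^ mu + 1) * ((q : ℚ) ^ t - 1) / (2 * ((q : ℚ) ^ (mu + t) - 1)) *
        gbinom ((q : ℚ) ^ 2) (mu + t) mu
        = (gbinom ((q : ℚ) ^ 2) (mu + t) mu
          + ((q : ℚ) ^ t - (q : ℚ) ^ mu) / ((q : ℚ) ^ (mu + t) - 1)
            * gbinom ((q : ℚ) ^ 2) (mu + t) mu) / 2 := by
      field_simp
      ring
    rw [hE, hd, hc]
    have hcd : ((c : ℚ) + (d : ℚ)) = 2 * (e : ℚ) := by exact_mod_cast he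
    rw [div_eq_iff (by norm_num : (2 : ℚ) ≠ 0)]
    linarith
  · obtain ⟨e, he⟩ := hpar
    refine ⟨e, ?_⟩
    have hE : ((q : ℚ) ^ mu - 1) * ((q : ℚ) ^ t + 1) / (2 * ((q : ℚ) ^ (mu + t) - 1)) *
        gbinom ((q : ℚ) ^ 2) (mu + t) mu
        = (gbinom ((q : ℚ) ^ 2) (mu + t) mu
          - ((q : ℚ) ^ t - (q : ℚ) ^ mu) / ((q : ℚ) ^ (mu + t) - 1)
            * gbinom ((q : ℚ) ^ 2) (mu + t) mu) / 2 := by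
      field_simp
      ring
    rw [hE, hd, hc]
    have hcd : ((c : ℚ) - (d : ℚ)) = 2 * (e : ℚ) := by exact_mod_cast he
    rw [div_eq_iff (by norm_num : (2 : ℚ) ≠ 0)]
    linarith
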